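/- arXiv:2402.12014 — 2 statements merged into one kernel-verified Lean document; each statement's English description precedes it below -/
import Mathlib

section
/- If D is a 3-dicritical digraph on n vertices that is distinct from the bidirected complete graph ↔K3 and from the directed wheel W3, then the number of arcs of D is at most C(n,2) + (2/3)·n. -/
/-- A (loopless, simple) digraph on vertex type `V`. -/
structure SimpleDigraph (V : Type) where
  Adj : V → V → Prop
  loopless : ∀ v, ¬ Adj v v

namespace SimpleDigraph

/-- A set of arcs (given as a relation) is acyclic if it admits no directed closed walk. -/
def AcyclicRel {V : Type} (A : V → V → Prop) : Prop :=
  ∀ v, ¬ Relation.TransGen A v v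

/-- A set of arcs is 2-dicolourable if the vertices can be coloured with two colours
so that each colour class induces an acyclic subdigraph. -/
def Dicolourable2Rel {V : Type} (A : V → V → Prop) : Prop :=
  ∃ φ : V → Fin 2, ∀ i : Fin 2,
    AcyclicRel (fun a b => A a b ∧ φ a = i ∧ φ b = i)

/-- A digraph is 2-dicolourable if its vertices can be coloured with two colours
so that each colour class induces an acyclic subdigraph. -/
def Dicolourable2 {V : Type} (D : SimpleDigraph V) : Prop :=
  Dicolourable2Rel D.Adj

/-- `(S, A)` describes a subdigraph of `D`: its vertex set is `S` and its arcs
are given by `A`, which must join vertices of `S` and be arcs of `D`. -/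
def IsSubdigraphOn {V : Type} (D : SimpleDigraph V) (S : Set V) (A : V → V → Prop) : Prop :=
  ∀ u v, A u v → u ∈ S ∧ v ∈ S ∧ D.Adj u v

/-- `D` is 3-dicritical: `D` is not 2-dicolourable, but every proper subdigraph of `D`
(one missing a vertex or an arc) is 2-dicolourable. -/
def Dicritical3 {V : Type} (D : SimpleDigraph V) : Prop :=
  ¬ D.Dicolourable2 ∧
    ∀ (S : Set V) (A : V → V → Prop), D.IsSubdigraphOn S A →
      (S ≠ Set.univ ∨ A ≠ D.Adj) → Dicolourable2Rel A

/-- A digraph is semi-complete if any two distinct vertices are joined by at least one arc. -/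
def SemiComplete {V : Type} (D : SimpleDigraph V) : Prop :=
  ∀ u v : V, u ≠ v → D.Adj u v ∨ D.Adj v u

/-- A tournament is a semi-complete digraph with no digon. -/
def IsTournament {V : Type} (D : SimpleDigraph V) : Prop :=
  D.SemiComplete ∧ ∀ u v : V, ¬ (D.Adj u v ∧ D.Adj v u)

/-- Isomorphism of digraphs. -/
def Iso {V W : Type} (D : SimpleDigraph V) (E : SimpleDigraph W) : Prop :=
  ∃ e : V ≃ W, ∀ u v : V, D.Adj u v ↔ E.Adj (e u) (e v)

/-- `D` contains (a copy of) `H` as a subdigraph. -/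
def ContainsSub {V W : Type} (D : SimpleDigraph V) (H : SimpleDigraph W) : Prop :=
  ∃ f : W → V, Function.Injective f ∧ ∀ a b, H.Adj a b → D.Adj (f a) (f b)

/-- `D` contains (a copy of) `H` as an induced subdigraph. -/
def ContainsInduced {V W : Type} (D : SimpleDigraph V) (H : SimpleDigraph W) : Prop :=
  ∃ f : W → V, Function.Injective f ∧ ∀ a b, H.Adj a b ↔ D.Adj (f a) (f b)

end SimpleDigraph

/-- An auxiliary constructor: the digraph on `Fin n` whose arcs are the pairs in `l`. -/
def digraphOfPairs (n : ℕ) (l : List (ℕ × ℕ)) (h : ∀ v : Fin n, (v.val, v.val) ∉ l) :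
    SimpleDigraph (Fin n) :=
  ⟨fun u v => (u.val, v.val) ∈ l, h⟩

/-- The bidirected complete graph `↔K2` on two vertices (a digon). -/
def biK2 : SimpleDigraph (Fin 2) :=
  ⟨fun u v => u ≠ v, fun v h => h rfl⟩

/-- The bidirected complete graph `↔K3` on three vertices. -/
def biK3 : SimpleDigraph (Fin 3) :=
  ⟨fun u v => u ≠ v, fun v h => h rfl⟩

/-- The directed cycle `C3` on three vertices. -/
def dirC3 : SimpleDigraph (Fin 3) :=
  ⟨fun u v => v = u + 1, by decide⟩

/-- The directed wheel `W3`: a directed triangle `0 → 1 → 2 → 0` together with a hub `3`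
joined by a digon to each triangle vertex. -/
def dirW3 : SimpleDigraph (Fin 4) :=
  digraphOfPairs 4 [(3,0),(0,3),(3,1),(1,3),(3,2),(2,3),(0,1),(1,2),(2,0)] (by decide)

/-- The digraph `H5` on vertices `u0, …, u4`: digons between `u0,u1` and between `u0,u4`,
and simple arcs `u4u1, u1u3, u1u2, u3u4, u2u4, u3u0, u0u2, u2u3`. -/
def digraphH5 : SimpleDigraph (Fin 5) :=
  digraphOfPairs 5 [(0,1),(1,0),(0,4),(4,0),(4,1),(1,3),(1,2),(3,4),(2,4),(3,0),(0,2),(2,3)]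
    (by decide)

/-- The Paley tournament `P7` on `ℤ/7ℤ`: an arc from `i` to `j` iff `j - i ∈ {1, 2, 4}`. -/
def dirP7 : SimpleDigraph (Fin 7) :=
  ⟨fun i j => j - i = 1 ∨ j - i = 2 ∨ j - i = 4, by decide⟩

/-- The rotative digraph `R(↔K2, ↔K2)`: digons `{0,1}` and `{2,3}`, all arcs from `{0,1}`
to `{2,3}`, all arcs from `{2,3}` to the extra vertex `4`, all arcs from `4` to `{0,1}`. -/
def rotK2K2 : SimpleDigraph (Fin 5) :=
  digraphOfPairs 5 [(0,1),(1,0),(2,3),(3,2),(0,2),(0,3),(1,2),(1,3),(2,4),(3,4),(4,0),(4,1)]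
    (by decide)

/-- The rotative digraph `R(↔K2, C3)`. -/
def rotK2C3 : SimpleDigraph (Fin 6) :=
  digraphOfPairs 6 [(0,1),(1,0),(2,3),(3,4),(4,2),(0,2),(0,3),(0,4),(1,2),(1,3),(1,4),
    (2,5),(3,5),(4,5),(5,0),(5,1)] (by decide)

/-- The rotative digraph `R(C3, ↔K2)`. -/
def rotC3K2 : SimpleDigraph (Fin 6) :=
  digraphOfPairs 6 [(0,1),(1,2),(2,0),(3,4),(4,3),(0,3),(0,4),(1,3),(1,4),(2,3),(2,4),
    (3,5),(4,5),(5,0),(5,1),(5,2)] (by decide)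

/-- The rotative digraph `R(C3, C3)`. -/
def rotC3C3 : SimpleDigraph (Fin 7) :=
  digraphOfPairs 7 [(0,1),(1,2),(2,0),(3,4),(4,5),(5,3),(0,3),(0,4),(0,5),(1,3),(1,4),(1,5),
    (2,3),(2,4),(2,5),(3,6),(4,6),(5,6),(6,0),(6,1),(6,2)] (by decide)

/-!
Let `d` and `d₀` count the ordered pairs of vertices that span a digon and that span no arc.
Summing over ordered pairs gives `2|A(D)| + d₀ + n = n² + d`, so it suffices to show
`3d ≤ 3d₀ + 4n`.

Dicriticality makes the digon graph very restricted. Deleting one arc of `D` leaves a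
2-dicolouring that gives the two ends of the arc the same colour and separates the ends of
every other digon. Along a digon path `a b c d`, deleting an arc between `a` and `d` would
force three colour changes between two equal colours, so `a` and `d` are non-adjacent; the same
parity argument rules out even digon cycles. An odd digon cycle is not 2-dicolourable, hence it
is all of `D`; then `D` has `2n` arcs and is `↔K3` when `n = 3`.

When the digon graph is a forest, `3d ≤ 3d₀ + 4n` follows by induction. Take a leaf `x` with
neighbour `y`. If `x` starts a digon path `x y z w`, removing `x` loses one digon and at least the
non-adjacent pair `{x, w}`. Otherwise all digon neighbours of `y` are leaves, and we remove the
whole star at `y`: among any three of its leaves some pair is non-adjacent, since otherwise they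
span either a transitive triangle, which an arc deletion excludes, or a directed triangle, which
with `y` forms a copy of `W3`.
-/

open Relation Finset

namespace SimpleGraph

variable {V : Type} {G H : SimpleGraph V}

lemma Walk.even_length_iff_eq (φ : V → Fin 2) {u v : V} (p : G.Walk u v)
    (hp : ∀ a b, s(a, b) ∈ p.edges → φ a ≠ φ b) : Even p.length ↔ φ u = φ v := by
  induction p with
  | nil => simp
  | @cons x y _ h p ih =>
    rw [length_cons, Nat.even_add_one, ih fun a b hab => hp a b (by simp [hab])]
    have := hp x y (by simp)
    omega

lemma IsAcyclic.exists_leaf (hG : G.IsAcyclic) {S : Finset V} (h : ∃ u ∈ S, ∃ v ∈ S, G.Adj u v) :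
    ∃ x ∈ S, ∃ y ∈ S, G.Adj x y ∧ ∀ z ∈ S, G.Adj x z → z = y := by
  classical
  obtain ⟨u, hu, v, hv, huv⟩ := h
  let P : ℕ → Prop := fun n =>
    ∃ (a b : V) (p : G.Walk a b), p.IsPath ∧ (∀ x ∈ p.support, x ∈ S) ∧ p.length = n
  have hbound : ∀ n, P n → n ≤ #S := by
    rintro n ⟨a, b, p, hp, hpS, rfl⟩
    have := card_le_card (s := p.support.toFinset) fun x hx => hpS x (List.mem_toFinset.1 hx)
    rw [List.toFinset_card_of_nodup hp.support_nodup, Walk.length_support] at this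
    omega
  have hP1 : P 1 := ⟨u, v, .cons huv .nil, by simp [huv.ne], by simp [hu, hv], rfl⟩
  obtain ⟨a, b, p, hp, hpS, hlen⟩ := Nat.findGreatest_spec (hbound 1 hP1) hP1
  have hnil : ¬p.Nil := by
    have := Nat.le_findGreatest (hbound 1 hP1) hP1
    rw [← Walk.length_eq_zero_iff, hlen]
    omega
  refine ⟨a, hpS a p.start_mem_support, p.snd, hpS _ (p.getVert_mem_support 1), p.adj_snd hnil,
    fun z hz haz => by_contra fun hne => ?_⟩
  -- a neighbour of the start outside the longest path would extend it
  have hzp : z ∉ p.support := fun h => hne (hG.eq_snd_of_adj_start hp haz h)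
  have hP : P (Nat.findGreatest P #S + 1) := ⟨z, b, .cons haz.symm p, hp.cons hzp,
    by simpa [hz] using hpS, by simp [hlen]⟩
  exact Nat.findGreatest_is_greatest (Nat.lt_succ_self _) (hbound _ hP) hP

variable [DecidableEq V] [DecidableRel G.Adj]

lemma card_interedges_erase {S : Finset V} {v : V} (hv : v ∈ S) :
    #(G.interedges S S) =
      #(G.interedges (S.erase v) (S.erase v)) + 2 * #(S.filter (G.Adj v)) := by
  set N := S.filter (G.Adj v)
  have hvN : v ∉ N := by simp [N]
  have hsplit : G.interedges S S =
      G.interedges (S.erase v) (S.erase v) ∪ ({v} ×ˢ N ∪ N ×ˢ {v}) := by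
    ext ⟨a, b⟩
    simp only [mem_interedges_iff, mem_union, mem_product, mem_singleton, mem_erase, N,
      mem_filter]
    constructor
    · rintro ⟨ha, hb, hab⟩
      by_cases hav : a = v
      · subst hav
        tauto
      · by_cases hbv : b = v
        · subst hbv
          exact Or.inr (Or.inr ⟨⟨ha, hab.symm⟩, rfl⟩)
        · tauto
    · rintro (⟨⟨-, ha⟩, ⟨-, hb⟩, hab⟩ | ⟨rfl, hb, hab⟩ | ⟨⟨ha, hab⟩, rfl⟩)
      exacts [⟨ha, hb, hab⟩, ⟨hv, hb, hab⟩, ⟨ha, hv, hab.symm⟩]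
  rw [hsplit, card_union_of_disjoint, card_union_of_disjoint, card_product, card_product,
    card_singleton, one_mul, mul_one, two_mul]
  · rw [Finset.disjoint_left]
    rintro ⟨a, b⟩ h1 h2
    simp only [mem_product, mem_singleton] at h1 h2
    exact hvN (h1.1 ▸ h2.1)
  · rw [Finset.disjoint_left]
    rintro ⟨a, b⟩ h1 h2
    simp only [mem_interedges_iff, mem_erase] at h1
    simp only [mem_union, mem_product, mem_singleton] at h2
    rcases h2 with ⟨rfl, -⟩ | ⟨-, rfl⟩
    exacts [h1.1.1 rfl, h1.2.1.1 rfl]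

lemma interedges_sdiff_eq {S N : Finset V} (hN : ∀ z ∈ N, ∀ w ∈ S, ¬G.Adj z w) :
    G.interedges (S \ N) (S \ N) = G.interedges S S := by
  ext ⟨a, b⟩
  simp only [mem_interedges_iff, mem_sdiff]
  constructor
  · tauto
  · rintro ⟨ha, hb, hab⟩
    exact ⟨⟨ha, fun h => hN a h b hb hab⟩, ⟨hb, fun h => hN b h a ha hab.symm⟩, hab⟩

lemma card_interedges_add_card_interedges_le {A B S : Finset V} (hAB : Disjoint A B)
    (hA : A ⊆ S) (hB : B ⊆ S) :
    #(G.interedges A A) + #(G.interedges B B) ≤ #(G.interedges S S) := by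
  rw [← card_union_of_disjoint]
  · exact card_le_card (union_subset (interedges_mono G hA hA) (interedges_mono G hB hB))
  · exact Finset.disjoint_left.2 fun p hpA hpB =>
      Finset.disjoint_left.1 hAB (G.mem_interedges_iff.1 hpA).1 (G.mem_interedges_iff.1 hpB).1

lemma card_sdiff_le_card_interedges {N K : Finset V} (h : ∀ z ∈ N \ K, ∃ w ∈ N, G.Adj w z) :
    #N - #K ≤ #(G.interedges N N) :=
  calc #N - #K ≤ #(N \ K) := le_card_sdiff K N
    _ ≤ #((G.interedges N N).image Prod.snd) := card_le_card fun z hz => by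
      obtain ⟨w, hw, hwz⟩ := h z hz
      exact mem_image.2 ⟨(w, z), G.mem_interedges_iff.2 ⟨hw, (mem_sdiff.1 hz).1, hwz⟩, rfl⟩
    _ ≤ #(G.interedges N N) := card_image_le

lemma card_sub_two_le_card_interedges {N : Finset V}
    (h : ∀ a ∈ N, ∀ b ∈ N, ∀ c ∈ N, a ≠ b → a ≠ c → b ≠ c → G.Adj a b ∨ G.Adj a c ∨ G.Adj b c) :
    #N - 2 ≤ #(G.interedges N N) := by
  rcases N.eq_empty_or_nonempty with rfl | ⟨p, hp⟩
  · simp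
  by_cases hqr : ∃ q ∈ N, ∃ r ∈ N, q ≠ r ∧ ¬G.Adj q r
  · obtain ⟨q, hq, r, hr, hqr, hnqr⟩ := hqr
    refine le_trans (by gcongr; exact card_le_two) (card_sdiff_le_card_interedges (K := {q, r}) ?_)
    intro z hz
    simp only [mem_sdiff, mem_insert, mem_singleton, not_or] at hz
    rcases h q hq r hr z hz.1 hqr (Ne.symm hz.2.1) (Ne.symm hz.2.2) with h | h | h
    exacts [absurd h hnqr, ⟨q, hq, h⟩, ⟨r, hr, h⟩]
  · push Not at hqr
    refine le_trans (by rw [card_singleton]; omega) (card_sdiff_le_card_interedges (K := {p}) ?_)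
    intro z hz
    simp only [mem_sdiff, mem_singleton] at hz
    exact ⟨p, hp, hqr p hp z hz.1 (Ne.symm hz.2)⟩

variable [DecidableRel H.Adj]

lemma three_mul_card_interedges_le_of_erase {S : Finset V} {v : V} (hv : v ∈ S)
    (hG : #(S.filter (G.Adj v)) ≤ 1) (hH : 1 ≤ #(S.filter (H.Adj v)))
    (ih : 3 * #(G.interedges (S.erase v) (S.erase v)) ≤
      3 * #(H.interedges (S.erase v) (S.erase v)) + 4 * #(S.erase v)) :
    3 * #(G.interedges S S) ≤ 3 * #(H.interedges S S) + 4 * #S := by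
  have := G.card_interedges_erase hv
  have := H.card_interedges_erase hv
  have := card_erase_add_one hv
  omega

lemma three_mul_card_interedges_le_of_star {S N : Finset V} {v : V} (hv : v ∈ S)
    (hN : N = S.filter (G.Adj v)) (hleaf : ∀ z ∈ N, ∀ w ∈ S, G.Adj z w → w = v)
    (hH : #N - 2 ≤ #(H.interedges N N))
    (ih : 3 * #(G.interedges (S.erase v \ N) (S.erase v \ N)) ≤
      3 * #(H.interedges (S.erase v \ N) (S.erase v \ N)) + 4 * #(S.erase v \ N)) :
    3 * #(G.interedges S S) ≤ 3 * #(H.interedges S S) + 4 * #S := by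
  subst hN
  set N := S.filter (G.Adj v)
  have hNS : N ⊆ S.erase v := fun z hz =>
    mem_erase.2 ⟨fun h => G.loopless.irrefl v (h ▸ (mem_filter.1 hz).2), (mem_filter.1 hz).1⟩
  have hGS : #(G.interedges S S) = #(G.interedges (S.erase v) (S.erase v)) + 2 * #N :=
    G.card_interedges_erase hv
  have hGT : G.interedges (S.erase v \ N) (S.erase v \ N) = G.interedges (S.erase v) (S.erase v) :=
    interedges_sdiff_eq fun z hz w hw hzw =>
      (mem_erase.1 hw).1 (hleaf z hz w (mem_of_mem_erase hw) hzw)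
  have hHT := H.card_interedges_add_card_interedges_le disjoint_sdiff_self_left sdiff_subset hNS
  have hHS := card_le_card (H.interedges_mono (erase_subset v S) (erase_subset v S))
  have hcard := card_sdiff_add_card_eq_card hNS
  have := card_erase_add_one hv
  rw [hGT] at ih
  omega

end SimpleGraph

lemma Set.ncard_compl_singleton {V : Type} [Fintype V] (u : V) :
    ({u}ᶜ : Set V).ncard = Fintype.card V - 1 := by
  rw [Set.ncard_compl, Set.ncard_singleton, Nat.card_eq_fintype_card]

namespace SimpleDigraph

variable {V W : Type} {D : SimpleDigraph V}

lemma Adj.ne {u v : V} (h : D.Adj u v) : u ≠ v :=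
  fun e => D.loopless u (e ▸ h)

lemma setOf_adj_subset_compl (u : V) : {w | D.Adj u w} ⊆ {u}ᶜ := fun _ h => h.ne.symm

def digonGraph (D : SimpleDigraph V) : SimpleGraph V where
  Adj u v := D.Adj u v ∧ D.Adj v u
  symm := ⟨fun _ _ h => h.symm⟩
  loopless := ⟨fun v h => D.loopless v h.1⟩

def nonadjGraph (D : SimpleDigraph V) : SimpleGraph V where
  Adj u v := u ≠ v ∧ ¬D.Adj u v ∧ ¬D.Adj v u
  symm := ⟨fun _ _ h => ⟨h.1.symm, h.2.2, h.2.1⟩⟩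
  loopless := ⟨fun _ h => h.1 rfl⟩

@[simp]
lemma digonGraph_adj {u v : V} : D.digonGraph.Adj u v ↔ D.Adj u v ∧ D.Adj v u := Iff.rfl

@[simp]
lemma nonadjGraph_adj {u v : V} :
    D.nonadjGraph.Adj u v ↔ u ≠ v ∧ ¬D.Adj u v ∧ ¬D.Adj v u := Iff.rfl

def deleteArc (D : SimpleDigraph V) (x y : V) : SimpleDigraph V :=
  ⟨fun u v => D.Adj u v ∧ ¬(u = x ∧ v = y), fun v h => D.loopless v h.1⟩

def colourClass (A : V → V → Prop) (φ : V → Fin 2) (i : Fin 2) : V → V → Prop :=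
  fun a b => A a b ∧ φ a = i ∧ φ b = i

/-- `Dicolourable2Rel A` unfolds to `∃ φ, IsDicolouring A φ`. -/
def IsDicolouring (A : V → V → Prop) (φ : V → Fin 2) : Prop :=
  ∀ i, AcyclicRel (colourClass A φ i)

lemma IsDicolouring.ne_of_adj_of_adj {A : V → V → Prop} {φ : V → Fin 2}
    (hφ : IsDicolouring A φ) {u v : V} (huv : A u v) (hvu : A v u) : φ u ≠ φ v := fun h =>
  hφ (φ u) u (.head ⟨huv, rfl, h.symm⟩ (.single ⟨hvu, h.symm, rfl⟩))

lemma IsDicolouring.comp {A : V → V → Prop} {B : W → W → Prop} {φ : V → Fin 2}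
    (hφ : IsDicolouring A φ) (f : W → V) (hf : ∀ a b, B a b → A (f a) (f b)) :
    IsDicolouring B (φ ∘ f) := fun i w hw =>
  hφ i (f w) (TransGen.lift f (fun a b h => ⟨hf a b h.1, h.2⟩) w w hw)

lemma IsDicolouring.ne_of_digon_ne {x y : V} {φ : V → Fin 2}
    (hφ : IsDicolouring (D.deleteArc x y).Adj φ) {u v : V} (huv : D.digonGraph.Adj u v)
    (hne : s(u, v) ≠ s(x, y)) : φ u ≠ φ v :=
  hφ.ne_of_adj_of_adj ⟨(digonGraph_adj.1 huv).1, fun h => hne (by rw [h.1, h.2])⟩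
    ⟨(digonGraph_adj.1 huv).2, fun h => hne (by rw [h.1, h.2, Sym2.eq_swap])⟩

lemma IsDicolouring.of_deleteArc {x y : V} {φ : V → Fin 2}
    (hφ : IsDicolouring (D.deleteArc x y).Adj φ)
    (hxy : TransGen (colourClass (D.deleteArc x y).Adj φ (φ x)) x y) :
    IsDicolouring D.Adj φ := by
  intro i v hv
  refine hφ i v (TransGen.closed (fun a b hab => ?_) v v hv)
  obtain ⟨hab, hai, hbi⟩ := hab
  by_cases h : a = x ∧ b = y
  · obtain ⟨rfl, rfl⟩ := h
    exact hai ▸ hxy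
  · exact .single ⟨⟨hab, h⟩, hai, hbi⟩

lemma dirW3_not_dicolourable2 : ¬dirW3.Dicolourable2 := by
  rintro ⟨φ, hφ⟩
  have adj : ∀ i j : Fin 4, (i.val, j.val) ∈
      [(3,0),(0,3),(3,1),(1,3),(3,2),(2,3),(0,1),(1,2),(2,0)] → dirW3.Adj i j := fun _ _ h => h
  have h0 := IsDicolouring.ne_of_adj_of_adj hφ (adj 3 0 (by decide)) (adj 0 3 (by decide))
  have h1 := IsDicolouring.ne_of_adj_of_adj hφ (adj 3 1 (by decide)) (adj 1 3 (by decide))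
  have h2 := IsDicolouring.ne_of_adj_of_adj hφ (adj 3 2 (by decide)) (adj 2 3 (by decide))
  exact hφ (φ 0) 0 (.head ⟨adj 0 1 (by decide), rfl, by omega⟩
    (.head ⟨adj 1 2 (by decide), by omega, by omega⟩ (.single ⟨adj 2 0 (by decide), by omega, rfl⟩)))

lemma natCard_arcs_of_forall_ncard_eq [Fintype V] {k : ℕ} (h : ∀ u, {w | D.Adj u w}.ncard = k) :
    Nat.card {p : V × V // D.Adj p.1 p.2} = k * Fintype.card V := by
  rw [Nat.card_congr (Equiv.subtypeProdEquivSigmaSubtype fun u w => D.Adj u w), Nat.card_sigma]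
  calc ∑ u, Nat.card {w // D.Adj u w} = ∑ _u : V, k :=
        Finset.sum_congr rfl fun u _ => (Nat.card_coe_set_eq {w | D.Adj u w}).trans (h u)
    _ = k * Fintype.card V := by simp [mul_comm]

lemma iso_biK3_of_forall_ncard_eq_two [Fintype V] (hV : Fintype.card V = 3)
    (h : ∀ u, {w | D.Adj u w}.ncard = 2) : D.Iso biK3 := by
  have hadj : ∀ u, {w | D.Adj u w} = {u}ᶜ := fun u =>
    Set.eq_of_subset_of_ncard_le (setOf_adj_subset_compl u)
      (by rw [Set.ncard_compl_singleton, h, hV])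
  refine ⟨Fintype.equivFinOfCardEq hV, fun u w => ?_⟩
  change w ∈ {w | D.Adj u w} ↔ _ ≠ _
  rw [hadj, Set.mem_compl_singleton_iff, ne_comm, (Fintype.equivFinOfCardEq hV).injective.ne_iff]

/-- Each ordered pair `(u, v)` with `u ≠ v` satisfies
`[u → v] + [v → u] + [u, v non-adjacent] = 1 + [u, v span a digon]`. -/
lemma two_mul_natCard_arcs_add [Fintype V] [DecidableEq V] [DecidableRel D.digonGraph.Adj]
    [DecidableRel D.nonadjGraph.Adj] :
    2 * Nat.card {p : V × V // D.Adj p.1 p.2} + #(D.nonadjGraph.interedges univ univ) +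
      Fintype.card V = Fintype.card V * Fintype.card V + #(D.digonGraph.interedges univ univ) := by
  classical
  have hpair : ∀ p : V × V, ((if D.Adj p.1 p.2 then 1 else 0) + (if D.Adj p.2 p.1 then 1 else 0) +
      (if D.nonadjGraph.Adj p.1 p.2 then 1 else 0) + if p.1 = p.2 then 1 else 0 : ℕ) =
      1 + if D.digonGraph.Adj p.1 p.2 then 1 else 0 := by
    rintro ⟨u, v⟩
    by_cases huv : u = v
    · subst huv
      simp [D.loopless]
    · by_cases h1 : D.Adj u v <;> by_cases h2 : D.Adj v u <;> simp [huv, h1, h2]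
  have hswap : ∑ p : V × V, (if D.Adj p.2 p.1 then 1 else 0 : ℕ) =
      ∑ p : V × V, if D.Adj p.1 p.2 then 1 else 0 :=
    Fintype.sum_equiv (Equiv.prodComm V V) _ _ fun _ => rfl
  have hdiag : #(univ.filter fun p : V × V => p.1 = p.2) = Fintype.card V := by
    rw [← univ_product_univ, ← Finset.diag_eq_filter, Finset.diag_card, card_univ]
  have hsum := Finset.sum_congr rfl fun p (_ : p ∈ (univ : Finset (V × V))) => hpair p
  simp only [Finset.sum_add_distrib, hswap, Finset.sum_boole, Nat.cast_id, Finset.sum_const,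
    card_univ, Fintype.card_prod, smul_eq_mul, mul_one, hdiag] at hsum
  simp only [SimpleGraph.interedges_def, univ_product_univ, Nat.card_eq_fintype_card, Fintype.card_subtype]
  omega

lemma Dicritical3.eq_of_not_dicolourable (hD : D.Dicritical3) {S : Set V} {A : V → V → Prop}
    (hA : D.IsSubdigraphOn S A) (hnA : ¬Dicolourable2Rel A) : S = Set.univ ∧ A = D.Adj := by
  by_contra h
  exact hnA (hD.2 S A hA (not_and_or.1 h))

lemma Dicritical3.exists_dicolouring_deleteArc (hD : D.Dicritical3) {x y : V} (hxy : D.Adj x y) :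
    ∃ φ, IsDicolouring (D.deleteArc x y).Adj φ ∧ φ x = φ y := by
  obtain ⟨φ, hφ⟩ := hD.2 Set.univ (D.deleteArc x y).Adj (fun u v h => ⟨trivial, trivial, h.1⟩)
    (Or.inr fun h => (h ▸ hxy : (D.deleteArc x y).Adj x y).2 ⟨rfl, rfl⟩)
  refine ⟨φ, hφ, by_contra fun hne => hD.1 ⟨φ, fun i v hv => hφ i v (TransGen.mono ?_ v v hv)⟩⟩
  rintro a b ⟨hab, ha, hb⟩
  exact ⟨⟨hab, fun ⟨hax, hby⟩ => hne (by rw [← hax, ← hby, ha, hb])⟩, ha, hb⟩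

lemma Dicritical3.iso_of_hom (hD : D.Dicritical3) {H : SimpleDigraph W} (hH : ¬H.Dicolourable2)
    {f : W → V} (hf : Function.Injective f) (hfH : ∀ a b, H.Adj a b → D.Adj (f a) (f b)) :
    D.Iso H := by
  let A : V → V → Prop := fun u v => ∃ a b, f a = u ∧ f b = v ∧ H.Adj a b
  have hA : D.IsSubdigraphOn (Set.range f) A := by
    rintro _ _ ⟨a, b, rfl, rfl, hab⟩
    exact ⟨⟨a, rfl⟩, ⟨b, rfl⟩, hfH a b hab⟩
  have hnA : ¬Dicolourable2Rel A := fun ⟨φ, hφ⟩ =>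
    hH ⟨φ ∘ f, IsDicolouring.comp hφ f fun a b h => ⟨a, b, rfl, rfl, h⟩⟩
  obtain ⟨hS, hAD⟩ := hD.eq_of_not_dicolourable hA hnA
  have hbij : Function.Bijective f := ⟨hf, Set.range_eq_univ.1 hS⟩
  refine ⟨(Equiv.ofBijective f hbij).symm, fun u v => ?_⟩
  obtain ⟨a, rfl⟩ := hbij.2 u
  obtain ⟨b, rfl⟩ := hbij.2 v
  rw [← hAD, Equiv.ofBijective_symm_apply_apply, Equiv.ofBijective_symm_apply_apply]
  simp [A, hf.eq_iff]

lemma Dicritical3.not_adj_of_digon_path (hD : D.Dicritical3) {a b c d : V}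
    (hab : D.digonGraph.Adj a b) (hbc : D.digonGraph.Adj b c) (hcd : D.digonGraph.Adj c d)
    (hac : a ≠ c) (hbd : b ≠ d) : ¬D.Adj a d := by
  intro had
  obtain ⟨φ, hφ, hφad⟩ := hD.exists_dicolouring_deleteArc had
  have h1 := hφ.ne_of_digon_ne hab (by simp [hbd, hab.ne.symm])
  have h2 := hφ.ne_of_digon_ne hbc (by simp [hab.ne.symm, hbd])
  have h3 := hφ.ne_of_digon_ne hcd (by simp [hac.symm, hcd.ne])
  omega

lemma Dicritical3.nonadjGraph_adj_of_digon_path (hD : D.Dicritical3) {a b c d : V}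
    (hab : D.digonGraph.Adj a b) (hbc : D.digonGraph.Adj b c) (hcd : D.digonGraph.Adj c d)
    (hac : a ≠ c) (hbd : b ≠ d) (had : a ≠ d) : D.nonadjGraph.Adj a d :=
  ⟨had, hD.not_adj_of_digon_path hab hbc hcd hac hbd,
    hD.not_adj_of_digon_path hcd.symm hbc.symm hab.symm hbd.symm hac.symm⟩

lemma Dicritical3.not_adj_of_digons_of_path (hD : D.Dicritical3) {h a b c : V}
    (hha : D.digonGraph.Adj h a) (hhb : D.digonGraph.Adj h b) (hhc : h ≠ c)
    (hab : D.Adj a b) (hbc : D.Adj b c) : ¬D.Adj a c := by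
  intro hac
  obtain ⟨φ, hφ, hφac⟩ := hD.exists_dicolouring_deleteArc hac
  have h1 := hφ.ne_of_digon_ne hha (by simp [hhc, hha.ne])
  have h2 := hφ.ne_of_digon_ne hhb (by simp [hha.ne, hab.ne.symm])
  -- `a`, `b`, `c` all get the colour not used on `h`, so `a → b → c` replaces the deleted arc
  refine hD.1 ⟨φ, hφ.of_deleteArc (.head ⟨⟨hab, ?_⟩, rfl, by omega⟩
    (.single ⟨⟨hbc, ?_⟩, by omega, by omega⟩))⟩
  · exact fun h => hbc.ne h.2
  · exact fun h => hab.ne h.1.symm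

lemma Dicritical3.iso_dirW3_of_digons_of_cycle (hD : D.Dicritical3) {h a b c : V}
    (hha : D.digonGraph.Adj h a) (hhb : D.digonGraph.Adj h b) (hhc : D.digonGraph.Adj h c)
    (hab : D.Adj a b) (hbc : D.Adj b c) (hca : D.Adj c a) : D.Iso dirW3 := by
  have := hab.ne; have := hbc.ne; have := hca.ne; have := hha.ne; have := hhb.ne; have := hhc.ne
  refine hD.iso_of_hom dirW3_not_dicolourable2 (f := ![a, b, c, h]) ?_ ?_
  · intro i j hij
    fin_cases i <;> fin_cases j <;> simp_all [eq_comm]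
  · intro i j hij
    fin_cases i <;> fin_cases j <;> simp_all [dirW3, digraphOfPairs]

lemma Dicritical3.exists_nonadj_of_digons (hD : D.Dicritical3) (hW3 : ¬D.Iso dirW3) {h a b c : V}
    (hha : D.digonGraph.Adj h a) (hhb : D.digonGraph.Adj h b) (hhc : D.digonGraph.Adj h c)
    (hab : a ≠ b) (hac : a ≠ c) (hbc : b ≠ c) :
    D.nonadjGraph.Adj a b ∨ D.nonadjGraph.Adj a c ∨ D.nonadjGraph.Adj b c := by
  by_contra! hne
  have adj : ∀ {u v}, u ≠ v → ¬D.nonadjGraph.Adj u v → D.Adj u v ∨ D.Adj v u := by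
    intro u v huv h
    simp only [nonadjGraph_adj, not_and_or, not_not] at h
    tauto
  rcases adj hab hne.1 with q1 | q1 <;> rcases adj hbc hne.2.2 with q2 | q2 <;>
    rcases adj hac hne.2.1 with q3 | q3
  · exact hD.not_adj_of_digons_of_path hha hhb hhc.ne q1 q2 q3
  · exact hW3 (hD.iso_dirW3_of_digons_of_cycle hha hhb hhc q1 q2 q3)
  · exact hD.not_adj_of_digons_of_path hha hhc hhb.ne q3 q2 q1
  · exact hD.not_adj_of_digons_of_path hhc hha hhb.ne q3 q1 q2
  · exact hD.not_adj_of_digons_of_path hhb hha hhc.ne q1 q3 q2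
  · exact hD.not_adj_of_digons_of_path hhb hhc hha.ne q2 q3 q1
  · exact hW3 (hD.iso_dirW3_of_digons_of_cycle hha hhc hhb q3 q2 q1)
  · exact hD.not_adj_of_digons_of_path hhc hhb hha.ne q2 q1 q3

lemma Dicritical3.not_even_length_of_isCycle (hD : D.Dicritical3) {v : V}
    {c : D.digonGraph.Walk v v} (hc : c.IsCycle) : ¬Even c.length := by
  cases c with
  | nil => exact absurd hc SimpleGraph.Walk.not_isCycle_nil
  | cons h p =>
    rw [SimpleGraph.Walk.cons_isCycle_iff] at hc
    obtain ⟨φ, hφ, hvw⟩ := hD.exists_dicolouring_deleteArc h.1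
    have hp := p.even_length_iff_eq φ fun a b hab =>
      hφ.ne_of_digon_ne (p.adj_of_mem_edges hab) fun he => hc.2 (he ▸ hab)
    rw [SimpleGraph.Walk.length_cons, Nat.even_add_one, hp]
    exact not_not.2 hvw.symm

lemma Dicritical3.adj_iff_toSubgraph_adj_of_odd (hD : D.Dicritical3) {v : V}
    {c : D.digonGraph.Walk v v} (hc : Odd c.length) :
    (∀ u, u ∈ c.support) ∧ ∀ u w, D.Adj u w ↔ c.toSubgraph.Adj u w := by
  have hA : D.IsSubdigraphOn {u | u ∈ c.support} c.toSubgraph.Adj := fun u w h =>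
    ⟨SimpleGraph.Walk.mem_support_of_adj_toSubgraph h,
      SimpleGraph.Walk.mem_support_of_adj_toSubgraph h.symm, h.adj_sub.1⟩
  have hnA : ¬Dicolourable2Rel c.toSubgraph.Adj := by
    rintro ⟨φ, hφ⟩
    have := c.even_length_iff_eq φ fun a b hab =>
      have hab' := c.mem_edges_toSubgraph.2 hab
      IsDicolouring.ne_of_adj_of_adj hφ hab' hab'.symm
    exact Nat.not_even_iff_odd.2 hc (this.2 rfl)
  obtain ⟨hS, hAD⟩ := hD.eq_of_not_dicolourable hA hnA
  exact ⟨Set.eq_univ_iff_forall.1 hS, fun u w => by rw [hAD]⟩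

lemma Dicritical3.three_mul_card_digons_le [DecidableEq V] [DecidableRel D.digonGraph.Adj]
    [DecidableRel D.nonadjGraph.Adj] (hD : D.Dicritical3) (hW3 : ¬D.Iso dirW3)
    (hG : D.digonGraph.IsAcyclic) (S : Finset V) :
    3 * #(D.digonGraph.interedges S S) ≤ 3 * #(D.nonadjGraph.interedges S S) + 4 * #S := by
  induction S using Finset.strongInduction with
  | H S ih =>
  by_cases hedge : ∃ u ∈ S, ∃ v ∈ S, D.digonGraph.Adj u v
  swap
  · have : D.digonGraph.interedges S S = ∅ := eq_empty_of_forall_notMem fun p hp =>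
      have := D.digonGraph.mem_interedges_iff.1 hp
      hedge ⟨p.1, this.1, p.2, this.2.1, this.2.2⟩
    simp [this]
  obtain ⟨x, hx, y, hy, hxy, hleaf⟩ := hG.exists_leaf hedge
  by_cases hpath : ∃ z ∈ S, ∃ w ∈ S, z ≠ x ∧ w ≠ y ∧ D.digonGraph.Adj y z ∧ D.digonGraph.Adj z w
  · obtain ⟨z, hz, w, hw, hzx, hwy, hyz, hzw⟩ := hpath
    have hxw : x ≠ w := by
      rintro rfl
      exact hyz.ne (hleaf z hz hzw.symm).symm
    have hnon := hD.nonadjGraph_adj_of_digon_path hxy hyz hzw hzx.symm hwy.symm hxw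
    refine SimpleGraph.three_mul_card_interedges_le_of_erase hx ?_ ?_ (ih _ (erase_ssubset hx))
    · exact card_le_one.2 fun a ha b hb =>
        (hleaf a (mem_filter.1 ha).1 (mem_filter.1 ha).2).trans
          (hleaf b (mem_filter.1 hb).1 (mem_filter.1 hb).2).symm
    · exact card_pos.2 ⟨w, mem_filter.2 ⟨hw, hnon⟩⟩
  · push Not at hpath
    have hleaves : ∀ z ∈ S.filter (D.digonGraph.Adj y), ∀ w ∈ S,
        D.digonGraph.Adj z w → w = y := by
      intro z hz w hw hzw
      obtain ⟨hzS, hyz⟩ := mem_filter.1 hz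
      by_cases hzx : z = x
      · subst hzx
        exact hleaf w hw hzw
      · by_contra hwy
        exact hpath z hzS w hw hzx hwy hyz hzw
    refine SimpleGraph.three_mul_card_interedges_le_of_star hy rfl hleaves ?_
      (ih _ (sdiff_subset.trans_ssubset (erase_ssubset hy)))
    refine SimpleGraph.card_sub_two_le_card_interedges fun a ha b hb c hc hab hac hbc => ?_
    exact hD.exists_nonadj_of_digons hW3 (mem_filter.1 ha).2 (mem_filter.1 hb).2
      (mem_filter.1 hc).2 hab hac hbc

end SimpleDigraph

lemma le_choose_two_add_of_six_mul_le {m n : ℕ} (h : 6 * m ≤ 3 * n * n + n) :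
    (m : ℚ) ≤ (n.choose 2 : ℚ) + (2 / 3 : ℚ) * (n : ℚ) := by
  rw [Nat.cast_choose_two]
  have : ((6 * m : ℕ) : ℚ) ≤ ((3 * n * n + n : ℕ) : ℚ) := Nat.cast_le.2 h
  push_cast at this
  linarith

/-- A 3-dicritical digraph on `n` vertices distinct from `↔K3` and from
the directed wheel `W3` has at most `C(n,2) + (2/3)·n` arcs. -/
theorem dicritical3_arcs_le
    {V : Type} [Fintype V] (D : SimpleDigraph V) (hD : D.Dicritical3)
    (hK3 : ¬ D.Iso biK3) (hW3 : ¬ D.Iso dirW3) :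
    (Nat.card {p : V × V // D.Adj p.1 p.2} : ℚ) ≤
      ((Fintype.card V).choose 2 : ℚ) + (2 / 3 : ℚ) * (Fintype.card V : ℚ) := by
  classical
  apply le_choose_two_add_of_six_mul_le
  by_cases hG : D.digonGraph.IsAcyclic
  · have hcount := SimpleDigraph.two_mul_natCard_arcs_add (D := D)
    have hbound := hD.three_mul_card_digons_le hW3 hG univ
    rw [card_univ] at hbound
    linarith
  · obtain ⟨v, c, hc⟩ : ∃ v, ∃ c : D.digonGraph.Walk v v, c.IsCycle := by
      simpa [SimpleGraph.IsAcyclic] using hG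
    obtain ⟨hsupp, hadj⟩ := hD.adj_iff_toSubgraph_adj_of_odd
      (Nat.not_even_iff_odd.1 (hD.not_even_length_of_isCycle hc))
    have hdeg : ∀ u, {w | D.Adj u w}.ncard = 2 := fun u => by
      rw [show {w | D.Adj u w} = c.toSubgraph.neighborSet u from Set.ext (hadj u)]
      exact hc.ncard_neighborSet_toSubgraph_eq_two (hsupp u)
    have h3 : 3 ≤ Fintype.card V := by
      have := Set.ncard_le_ncard (SimpleDigraph.setOf_adj_subset_compl (D := D) v)
      rw [hdeg, Set.ncard_compl_singleton] at this
      omega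
    rw [SimpleDigraph.natCard_arcs_of_forall_ncard_eq hdeg]
    rcases h3.eq_or_lt with h3 | h4
    · exact absurd (SimpleDigraph.iso_biK3_of_forall_ncard_eq_two h3.symm hdeg) hK3
    · nlinarith
end

section
/- Let T be a tree on n ≥ 1 vertices. Then dearth(T) ≥ n/3 − 1, where dearth(T) = Σ_{v ∈ V3(T)} d(v)(d(v)−1)/6 + op(T), V3(T) is the set of vertices of T of degree at least 3, and op(T) is the number of odd pairs of T, i.e. pairs of non-adjacent vertices whose distance in T is odd. -/
/-- The dearth of a graph `T`:
`Σ_{v : deg(v) ≥ 3} deg(v)(deg(v)-1)/6` plus the number of odd pairs of `T`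
(pairs of non-adjacent vertices at odd distance). -/
noncomputable def dearth {W : Type} [Fintype W] (T : SimpleGraph W) [DecidableRel T.Adj] : ℚ :=
  (∑ v ∈ Finset.univ.filter (fun v => 3 ≤ T.degree v),
      (T.degree v : ℚ) * ((T.degree v : ℚ) - 1) / 6) +
  (Nat.card {p : Sym2 W // ∃ u w : W, p = s(u, w) ∧ u ≠ w ∧ ¬ T.Adj u w ∧ Odd (T.dist u w)} : ℚ)

section Aux

open SimpleGraph Finset

variable {W : Type} [Fintype W] [DecidableEq W]

/-- In a tree, every path has length equal to the distance between its ends. -/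
lemma tree_path_length {T : SimpleGraph W} (hT : T.IsTree) {u v : W}
    (p : T.Walk u v) (hp : p.IsPath) : p.length = T.dist u v := by
  obtain ⟨q, hq, hql⟩ := hT.isConnected.exists_path_of_dist u v
  have h2 := hT.IsAcyclic.path_unique ⟨p, hp⟩ ⟨q, hq⟩
  rw [Subtype.ext_iff] at h2
  rw [show p = q from h2, hql]

/-- In a tree, distances from a root to adjacent vertices differ by one. -/
lemma tree_adj_dist {T : SimpleGraph W} (hT : T.IsTree) (r : W) {u v : W}
    (h : T.Adj u v) : T.dist r v = T.dist r u + 1 ∨ T.dist r u = T.dist r v + 1 := by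
  obtain ⟨p, hp, hpl⟩ := hT.isConnected.exists_path_of_dist r u
  by_cases hv : v ∈ p.support
  · right
    have hsplit := p.take_spec hv
    have htp : (p.takeUntil v hv).IsPath := hp.takeUntil hv
    have hdp : (p.dropUntil v hv).IsPath := hp.dropUntil hv
    have hedge : (SimpleGraph.Walk.cons h.symm SimpleGraph.Walk.nil : T.Walk v u).IsPath := by
      simp [h.ne']
    have huniq := hT.IsAcyclic.path_unique ⟨p.dropUntil v hv, hdp⟩ ⟨_, hedge⟩
    have hlen1 : (p.dropUntil v hv).length = 1 := by
      have : p.dropUntil v hv = SimpleGraph.Walk.cons h.symm SimpleGraph.Walk.nil := by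
        rw [Subtype.ext_iff] at huniq; exact huniq
      simp [this]
    have hlt : (p.takeUntil v hv).length = T.dist r v := tree_path_length hT _ htp
    have : (p.takeUntil v hv).length + (p.dropUntil v hv).length = p.length := by
      rw [← SimpleGraph.Walk.length_append, hsplit]
    omega
  · left
    have hq : (p.concat h).IsPath := by
      rw [← SimpleGraph.Walk.isPath_reverse_iff, SimpleGraph.Walk.reverse_concat,
        SimpleGraph.Walk.cons_isPath_iff]
      constructor
      · rwa [SimpleGraph.Walk.isPath_reverse_iff]
      · simpa using hv
    have := tree_path_length hT _ hq
    rw [SimpleGraph.Walk.length_concat] at this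
    omega

/-- A 2-coloring of a tree by distance parity. -/
noncomputable def treeColoring {T : SimpleGraph W} (hT : T.IsTree) (r : W) :
    T.Coloring Bool :=
  SimpleGraph.Coloring.mk (fun v => (T.dist r v) % 2 = 0) (by
    intro u v h hne
    rcases tree_adj_dist hT r h with h' | h' <;> simp only [decide_eq_decide] at hne <;> omega)

lemma tree_odd_dist {T : SimpleGraph W} (hT : T.IsTree) (r : W) {u v : W}
    (h : treeColoring hT r u ≠ treeColoring hT r v) : Odd (T.dist u v) := by
  obtain ⟨p, hp, hpl⟩ := hT.isConnected.exists_path_of_dist u v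
  rw [← hpl]
  rw [(treeColoring hT r).odd_length_iff_not_congr p]
  cases hc : treeColoring hT r u <;> cases hc' : treeColoring hT r v <;>
    simp_all


omit [DecidableEq W] in
lemma tree_exists_adj {T : SimpleGraph W} (hT : T.IsTree) (h2 : 2 ≤ Fintype.card W)
    (w : W) : ∃ x, T.Adj w x := by
  obtain ⟨u, hu⟩ := Fintype.exists_ne_of_one_lt_card h2 w
  obtain ⟨p⟩ := hT.isConnected w u
  obtain ⟨x, h, q, -⟩ := SimpleGraph.Walk.exists_eq_cons_of_ne (Ne.symm hu) p
  exact ⟨x, h⟩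

theorem dearth_ge_third_card'
    {W : Type} [Fintype W] [Nonempty W] (T : SimpleGraph W) [DecidableRel T.Adj]
    (hT : T.IsTree) :
    (Fintype.card W : ℚ) / 3 - 1 ≤
      (∑ v ∈ Finset.univ.filter (fun v => 3 ≤ T.degree v),
        (T.degree v : ℚ) * ((T.degree v : ℚ) - 1) / 6) +
      (Nat.card {p : Sym2 W // ∃ u w : W, p = s(u, w) ∧ u ≠ w ∧ ¬ T.Adj u w ∧ Odd (T.dist u w)} : ℚ) := by
  classical
  set n := Fintype.card W with hn
  set P : Sym2 W → Prop :=
    fun p => ∃ u w : W, p = s(u, w) ∧ u ≠ w ∧ ¬ T.Adj u w ∧ Odd (T.dist u w) with hP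
  have hsum0 : 0 ≤ ∑ v ∈ Finset.univ.filter (fun v => 3 ≤ T.degree v),
      (T.degree v : ℚ) * ((T.degree v : ℚ) - 1) / 6 := by
    apply Finset.sum_nonneg
    intro v hv
    have h3 : (3:ℚ) ≤ (T.degree v : ℚ) := by
      exact_mod_cast (Finset.mem_filter.mp hv).2
    nlinarith
  have hcard0 : (0:ℚ) ≤ (Nat.card {p : Sym2 W // P p} : ℚ) := Nat.cast_nonneg _
  by_cases hn3 : n ≤ 3
  · have : (n:ℚ) ≤ 3 := by exact_mod_cast hn3
    linarith
  push_neg at hn3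
  have hn4 : (4:ℚ) ≤ (n:ℚ) := by exact_mod_cast hn3
  -- coloring
  have r : W := Classical.arbitrary W
  let c := treeColoring hT r
  -- count of odd pairs
  have hk : Nat.card {p : Sym2 W // P p} = (Finset.univ.filter P).card := by
    rw [Nat.card_eq_fintype_card, Fintype.card_subtype]
  set k := (Finset.univ.filter P).card with hkdef
  -- the key degree lemma for unbalanced colorings
  have hdeg : ∀ b0 : Bool, (Finset.univ.filter (fun v => c v = b0)).card ≤ 1 →
      ∃ x : W, T.degree x = n - 1 := by
    intro b0 hb0
    have hne : (Finset.univ.filter (fun v => c v = b0)).Nonempty := by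
      by_contra hemp
      rw [Finset.not_nonempty_iff_eq_empty, Finset.filter_eq_empty_iff] at hemp
      obtain ⟨x, hx⟩ := tree_exists_adj hT (by omega) (Classical.arbitrary W)
      have h1 := hemp (Finset.mem_univ (Classical.arbitrary W))
      have h2 := hemp (Finset.mem_univ x)
      have := c.valid hx
      cases hcb : c (Classical.arbitrary W) <;> cases hcx : c x <;>
        simp_all <;> cases b0 <;> simp_all
    obtain ⟨x, hx⟩ := hne
    have hxc : c x = b0 := (Finset.mem_filter.mp hx).2
    refine ⟨x, ?_⟩
    have hadj : ∀ w : W, w ≠ x → T.Adj w x := by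
      intro w hw
      obtain ⟨p⟩ := hT.isConnected w x
      obtain ⟨y, hwy, q, -⟩ := SimpleGraph.Walk.exists_eq_cons_of_ne hw p
      have hyx : y = x := by
        by_contra hyx
        -- then both w and y avoid color b0? no: w could be b0... 
        -- w ≠ x means w not in the class (class has card ≤ 1 containing x)
        have hwc : c w ≠ b0 := by
          intro hcw
          have : w ∈ Finset.univ.filter (fun v => c v = b0) := by
            simp [hcw]
          exact hw (Finset.card_le_one.mp hb0 _ this _ hx)
        have hyc : c y ≠ b0 := by
          intro hcy
          have : y ∈ Finset.univ.filter (fun v => c v = b0) := by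
            simp [hcy]
          exact hyx (Finset.card_le_one.mp hb0 _ this _ hx)
        have := c.valid hwy
        cases hcb : c w <;> cases hcy2 : c y <;> simp_all <;> cases b0 <;> simp_all
      exact hyx ▸ hwy
    have : T.neighborFinset x = Finset.univ.erase x := by
      ext w
      simp only [SimpleGraph.mem_neighborFinset, Finset.mem_erase, Finset.mem_univ, and_true]
      constructor
      · intro h; exact h.ne'
      · intro h; exact (hadj w h).symm
    rw [← SimpleGraph.card_neighborFinset_eq_degree, this,
      Finset.card_erase_of_mem (Finset.mem_univ x), Finset.card_univ]
  -- main case split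
  set A : Finset W := Finset.univ.filter (fun v => c v = true) with hA
  have hAcompl : Aᶜ = Finset.univ.filter (fun v => c v = false) := by
    ext v
    simp [hA, Finset.mem_compl]
  by_cases hsmall : A.card ≤ 1 ∨ Aᶜ.card ≤ 1
  · -- degree term dominates
    obtain ⟨x, hx⟩ : ∃ x : W, T.degree x = n - 1 := by
      rcases hsmall with h | h
      · exact hdeg true h
      · exact hdeg false (by rwa [hAcompl] at h)
    have hx3 : 3 ≤ T.degree x := by omega
    have hxmem : x ∈ Finset.univ.filter (fun v => 3 ≤ T.degree v) := by
      simp [hx3]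
    have hsingle : (T.degree x : ℚ) * ((T.degree x : ℚ) - 1) / 6 ≤
        ∑ v ∈ Finset.univ.filter (fun v => 3 ≤ T.degree v),
          (T.degree v : ℚ) * ((T.degree v : ℚ) - 1) / 6 := by
      apply Finset.single_le_sum (f := fun v => (T.degree v : ℚ) * ((T.degree v : ℚ) - 1) / 6)
        (fun i hi => ?_) hxmem
      have h3 : (3:ℚ) ≤ (T.degree i : ℚ) := by
        exact_mod_cast (Finset.mem_filter.mp hi).2
      nlinarith
    have hdx : (T.degree x : ℚ) = (n : ℚ) - 1 := by
      rw [hx]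
      push_cast [Nat.cast_sub (by omega : 1 ≤ n)]
      ring
    rw [hdx] at hsingle
    nlinarith
  -- balanced case: count odd pairs
  push_neg at hsmall
  obtain ⟨ha2, hb2⟩ := hsmall
  set a := A.card with ha
  set b := Aᶜ.card with hb
  have hab : a + b = n := by
    rw [ha, hb]
    exact Finset.card_add_card_compl A
  -- the image of cross pairs
  set S : Finset (Sym2 W) := (A ×ˢ Aᶜ).image (fun x => s(x.1, x.2)) with hS
  have hScard : S.card = a * b := by
    rw [hS, Finset.card_image_of_injOn, Finset.card_product]
    intro x hx y hy hxy
    simp only [Finset.mem_coe, Finset.mem_product] at hx hy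
    rw [Sym2.eq_iff] at hxy
    rcases hxy with ⟨h1, h2⟩ | ⟨h1, h2⟩
    · exact Prod.ext h1 h2
    · exfalso
      have h1A : y.2 ∈ A := h1 ▸ hx.1
      exact (Finset.mem_compl.mp hy.2) h1A
  -- remove edges
  have hedges : T.edgeFinset.card + 1 = n := hT.card_edgeFinset
  have hsub : S.filter (fun p => p ∉ T.edgeFinset) ⊆ Finset.univ.filter P := by
    intro p hp
    rw [Finset.mem_filter] at hp ⊢
    refine ⟨Finset.mem_univ _, ?_⟩
    obtain ⟨hpS, hpe⟩ := hp
    rw [hS, Finset.mem_image] at hpS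
    obtain ⟨x, hx, rfl⟩ := hpS
    simp only [Finset.mem_product] at hx
    have hx1 : c x.1 = true := (Finset.mem_filter.mp hx.1).2
    have hx2 : c x.2 = false := by
      have h2 := Finset.mem_compl.mp hx.2
      simp only [hA, Finset.mem_filter, Finset.mem_univ, true_and] at h2
      simpa using h2
    have hcne : c x.1 ≠ c x.2 := by rw [hx1, hx2]; simp
    refine ⟨x.1, x.2, rfl, ?_, ?_, ?_⟩
    · intro h; exact hcne (h ▸ rfl)
    · intro h
      exact hpe (SimpleGraph.mem_edgeFinset.mpr h)
    · exact tree_odd_dist hT r hcne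
  have hcut : S.card ≤ (n - 1) + k := by
    have hsplit := Finset.card_filter_add_card_filter_not
      (s := S) (p := fun p => p ∈ T.edgeFinset)
    have h1 : (S.filter (fun p => p ∈ T.edgeFinset)).card ≤ T.edgeFinset.card :=
      Finset.card_le_card (fun p hp => (Finset.mem_filter.mp hp).2)
    have h2 : (S.filter (fun p => ¬ p ∈ T.edgeFinset)).card ≤ k := by
      rw [hkdef]
      exact Finset.card_le_card hsub
    omega
  have hcutQ : (a : ℚ) * b + 1 ≤ (n : ℚ) + k := by
    have : a * b + 1 ≤ n + k := by omega
    exact_mod_cast this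
  have habQ : (a : ℚ) + b = n := by exact_mod_cast hab
  have ha2Q : (2 : ℚ) ≤ a := by exact_mod_cast ha2
  have hb2Q : (2 : ℚ) ≤ b := by exact_mod_cast hb2
  have hNc : (Nat.card {p : Sym2 W // ∃ u w : W,
      p = s(u, w) ∧ u ≠ w ∧ ¬ T.Adj u w ∧ Odd (T.dist u w)} : ℚ) = (k : ℚ) := by
    exact_mod_cast (hk : Nat.card {p : Sym2 W // P p} = k)
  rw [hNc]
  nlinarith [mul_nonneg (sub_nonneg.mpr ha2Q) (sub_nonneg.mpr hb2Q), hsum0]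

end Aux

/-- Every tree `T` on `n ≥ 1` vertices satisfies
`dearth(T) ≥ n/3 - 1`. -/
theorem dearth_ge_third_card
    {W : Type} [Fintype W] [Nonempty W] (T : SimpleGraph W) [DecidableRel T.Adj]
    (hT : T.IsTree) :
    (Fintype.card W : ℚ) / 3 - 1 ≤ dearth T := by
  unfold dearth
  exact dearth_ge_third_card' T hT
end
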